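/- There exist a qubit state ρ and self-adjoint operators A, B on ℂ² such that the two orderings of operational joint probabilities coincide (tr[P_A(a)ρP_A(a)P_B(b)] = tr[P_B(b)ρP_B(b)P_A(a)] for all a, b) yet tr[ρ[A,B]] ≠ 0 and tr[−([A,B])²ρ] ≠ 0. Concretely, ρ = |y+⟩⟨y+| (the +1 eigenstate of σ_y), A = σ_z, B = cos θ σ_z + sin θ σ_x with θ ∉ {0, π} provide such an example. -/

import Mathlib

open Matrix Complex
open scoped ComplexOrder

/-- Spectral projection of a dichotomic (`M² = 1`) observable `M` onto eigenvalue `s ∈ {±1}`. -/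
noncomputable def proj (M : Matrix (Fin 2) (Fin 2) ℂ) (s : ℂ) : Matrix (Fin 2) (Fin 2) ℂ :=
  (2 : ℂ)⁻¹ • (1 + s • M)

/-- There exist a qubit state `ρ` and dichotomic observables `A`, `B` such that the two
orderings of operational joint probabilities coincide, yet `tr[ρ[A,B]] ≠ 0` and
`tr[−[A,B]² ρ] ≠ 0` (state-dependent non-commutativity does not vanish). -/
theorem coincidence_without_commutativity :
    ∃ (ρ A B : Matrix (Fin 2) (Fin 2) ℂ),
      ρ.PosSemidef ∧ ρ.trace = 1 ∧
      A.IsHermitian ∧ B.IsHermitian ∧ A * A = 1 ∧ B * B = 1 ∧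
      (∀ s t : ℂ, (s = 1 ∨ s = -1) → (t = 1 ∨ t = -1) →
        (proj A s * ρ * proj A s * proj B t).trace
          = (proj B t * ρ * proj B t * proj A s).trace) ∧
      (ρ * (A * B - B * A)).trace ≠ 0 ∧
      ((-((A * B - B * A) * (A * B - B * A))) * ρ).trace ≠ 0 := by
  refine ⟨!![1/2, -I/2; I/2, 1/2], !![1, 0; 0, -1], !![0, 1; 1, 0], ?_, ?_, ?_, ?_, ?_, ?_, ?_, ?_, ?_⟩
  · rw [Matrix.posSemidef_iff_dotProduct_mulVec]
    constructor
    · ext i j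
      fin_cases i <;> fin_cases j <;>
        simp [Matrix.conjTranspose_apply, Complex.ext_iff]
    · intro x
      have h : star x ⬝ᵥ (!![1/2, -I/2; I/2, 1/2] *ᵥ x)
          = (2 : ℂ)⁻¹ * (star (x 0 - I * x 1) * (x 0 - I * x 1)) := by
        simp [dotProduct, Matrix.mulVec, Fin.sum_univ_two]
        ring_nf
        rw [Complex.I_sq]
        ring
      rw [h]
      have h2 : (0 : ℂ) ≤ (2 : ℂ)⁻¹ := by
        rw [Complex.le_def]; norm_num
      exact mul_nonneg h2 (star_mul_self_nonneg _)
  · simp [Matrix.trace, Fin.sum_univ_two]; ring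
  · ext i j
    fin_cases i <;> fin_cases j <;>
      simp [Matrix.conjTranspose_apply, Complex.ext_iff]
  · ext i j
    fin_cases i <;> fin_cases j <;>
      simp [Matrix.conjTranspose_apply, Complex.ext_iff]
  · ext i j
    fin_cases i <;> fin_cases j <;>
      simp [Matrix.mul_apply, Fin.sum_univ_two, Matrix.one_apply]
  · ext i j
    fin_cases i <;> fin_cases j <;>
      simp [Matrix.mul_apply, Fin.sum_univ_two, Matrix.one_apply]
  · rintro s t (rfl | rfl) (rfl | rfl) <;>
      · simp only [proj, Matrix.trace, Matrix.mul_apply, Fin.sum_univ_two,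
          Matrix.smul_apply, Matrix.add_apply, Matrix.one_apply, Matrix.diag]
        norm_num
        ring
  · simp [Matrix.trace, Matrix.mul_apply, Fin.sum_univ_two, Complex.ext_iff]
    norm_num
  · simp [Matrix.trace, Matrix.mul_apply, Fin.sum_univ_two, Complex.ext_iff]
    norm_num
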